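/- The Laplace mechanism satisfies ε-DP: for f: D → ℝⁿ with L1-sensitivity Δ_f, releasing f(D) + (Z_1,...,Z_n) with Z_j i.i.d. Laplace(0, Δ_f/ε) is ε-differentially private. -/
import Mathlib


open MeasureTheory

theorem stmt_15 {D : Type*} (neighbor : D → D → Prop)
    (n : ℕ) (f : D → Fin n → ℝ) (Δ ε : ℝ) (hΔ : 0 < Δ) (hε : 0 < ε)
    (hsens : ∀ d d', neighbor d d' → ∑ i, |f d i - f d' i| ≤ Δ)
    (M : D → Measure (Fin n → ℝ))
    (hM : ∀ d, M d = (Measure.pi fun _ : Fin n => (volume : Measure ℝ)).withDensity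
      fun z => ENNReal.ofReal (∏ i, ε / (2 * Δ) * Real.exp (-(|z i - f d i| * ε / Δ))))
    (d d' : D) (hnb : neighbor d d') (s : Set (Fin n → ℝ)) (hs : MeasurableSet s) :
    M d s ≤ ENNReal.ofReal (Real.exp ε) * M d' s := by
  rw [hM, hM, withDensity_apply _ hs, withDensity_apply _ hs, ← lintegral_const_mul']
  · apply lintegral_mono
    intro z
    dsimp only
    rw [← ENNReal.ofReal_mul (Real.exp_pos ε).le]
    apply ENNReal.ofReal_le_ofReal
    rw [Finset.prod_mul_distrib, Finset.prod_mul_distrib, ← Real.exp_sum, ← Real.exp_sum]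
    rw [mul_comm (Real.exp ε), mul_assoc, ← Real.exp_add]
    apply mul_le_mul_of_nonneg_left _ (Finset.prod_nonneg fun i _ => by positivity)
    apply Real.exp_le_exp.mpr
    rw [← sub_le_iff_le_add']
    have key : (∑ i, -(|z i - f d i| * ε / Δ)) - ∑ i, -(|z i - f d' i| * ε / Δ)
        ≤ ∑ i, |f d i - f d' i| * ε / Δ := by
      rw [← Finset.sum_sub_distrib]
      apply Finset.sum_le_sum
      intro i _
      have h1 : |z i - f d' i| - |z i - f d i| ≤ |f d i - f d' i| := by
        have := abs_sub_abs_le_abs_sub (z i - f d' i) (z i - f d i)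
        have h2 : |(z i - f d' i) - (z i - f d i)| = |f d i - f d' i| := by
          rw [show (z i - f d' i) - (z i - f d i) = f d i - f d' i by ring]
        linarith
      rw [neg_sub_neg]
      rw [div_sub_div_same, div_le_div_iff₀ hΔ hΔ, ← sub_mul]
      have : (|z i - f d' i| - |z i - f d i|) * ε ≤ |f d i - f d' i| * ε :=
        mul_le_mul_of_nonneg_right h1 hε.le
      nlinarith [abs_nonneg (f d i - f d' i), mul_nonneg (mul_nonneg (abs_nonneg (f d i - f d' i)) hε.le) hΔ.le]
    calc (∑ i, -(|z i - f d i| * ε / Δ)) - ∑ i, -(|z i - f d' i| * ε / Δ)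
        ≤ ∑ i, |f d i - f d' i| * ε / Δ := key
      _ = (∑ i, |f d i - f d' i|) * ε / Δ := by
          rw [← Finset.sum_div, ← Finset.sum_mul]
      _ ≤ Δ * ε / Δ := by
          gcongr
          exact hsens d d' hnb
      _ = ε := by field_simp
  · exact ENNReal.ofReal_ne_top
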